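/- (Tits' solution to the word problem for right-angled Coxeter groups.) Let W_K be the right-angled Coxeter group of a simplicial graph K (possibly infinite). If a word w = v₁v₂⋯v_l in the standard generators represents the identity element of W_K, then w can be reduced to the empty word by a sequence of moves of two types: (i) replacing a subword vv' by v'v when {v,v'} is an edge of K, and (ii) deleting a subword vv. -/

import Mathlib

/-- The relators of the right-angled Coxeter group of a simplicial graph `K`:
`v² = 1` for each vertex `v`, and `(vw)² = 1` for each edge `{v,w}`. -/
def racgRels {V : Type*} (K : SimpleGraph V) : Set (FreeGroup V) :=
  {r | (∃ v : V, r = FreeGroup.of v * FreeGroup.of v) ∨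
    (∃ v w : V, K.Adj v w ∧ r = (FreeGroup.of v * FreeGroup.of w) ^ 2)}

/-- The right-angled Coxeter group of a simplicial graph. -/
def RACG {V : Type*} (K : SimpleGraph V) : Type _ :=
  PresentedGroup (racgRels K)

noncomputable instance {V : Type*} (K : SimpleGraph V) : Group (RACG K) :=
  inferInstanceAs (Group (PresentedGroup (racgRels K)))

/-- Tits moves on words in the vertex generators of a right-angled Coxeter group:
swap two adjacent letters that are joined by an edge of `K`, or delete a repeated
letter `vv`. -/
inductive TitsMove {V : Type*} (K : SimpleGraph V) : List V → List V → Prop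
  | swap (v w : V) (h : K.Adj v w) (p q : List V) :
      TitsMove K (p ++ v :: w :: q) (p ++ w :: v :: q)
  | delete (v : V) (p q : List V) :
      TitsMove K (p ++ v :: v :: q) (p ++ q)

namespace TitsAux

variable {V : Type*} {K : SimpleGraph V}

/-- Transport a Tits move along equalities of words. -/
lemma tm_of_eq {a b a' b' : List V} (h : TitsMove K a b) (ha : a = a') (hb : b = b') :
    TitsMove K a' b' := ha ▸ hb ▸ h

lemma rtg_of_eq {a b a' b' : List V} (h : Relation.ReflTransGen (TitsMove K) a b)
    (ha : a = a') (hb : b = b') : Relation.ReflTransGen (TitsMove K) a' b' := ha ▸ hb ▸ h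

/-- Decomposing a word with a marked window of two letters against a word with
one marked letter. -/
lemma two_split {p' q' p s : List V} {x y v : V}
    (h : p' ++ x :: y :: q' = p ++ v :: s) :
    (∃ r, p = p' ++ x :: y :: r ∧ q' = r ++ v :: s) ∨
    (p' = p ∧ x = v ∧ s = y :: q') ∨
    (p = p' ++ [x] ∧ y = v ∧ s = q') ∨
    (∃ r, p' = p ++ v :: r ∧ s = r ++ x :: y :: q') := by
  rcases List.append_eq_append_iff.1 h with ⟨r, hp, hq⟩ | ⟨r, hp, hq⟩
  · match r, hp, hq with
    | [], hp, hq =>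
      simp only [List.nil_append, List.cons.injEq] at hq
      obtain ⟨rfl, rfl⟩ := hq
      exact Or.inr (Or.inl ⟨by simpa using hp.symm, rfl, rfl⟩)
    | [a], hp, hq =>
      simp only [List.cons_append, List.nil_append, List.cons.injEq] at hq
      obtain ⟨rfl, rfl, rfl⟩ := hq
      exact Or.inr (Or.inr (Or.inl ⟨hp, rfl, rfl⟩))
    | a :: b :: r, hp, hq =>
      simp only [List.cons_append, List.cons.injEq] at hq
      obtain ⟨rfl, rfl, rfl⟩ := hq
      exact Or.inl ⟨r, hp, rfl⟩
  · match r, hp, hq with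
    | [], hp, hq =>
      simp only [List.nil_append, List.cons.injEq] at hq
      obtain ⟨rfl, rfl⟩ := hq
      exact Or.inr (Or.inl ⟨by simpa using hp, rfl, rfl⟩)
    | a :: r, hp, hq =>
      simp only [List.cons_append, List.cons.injEq] at hq
      obtain ⟨rfl, rfl⟩ := hq
      exact Or.inr (Or.inr (Or.inr ⟨r, hp, rfl⟩))

/-- Move a letter to the right through letters it commutes with. -/
lemma swap_right (v : V) (m : List V) (hm : ∀ x ∈ m, K.Adj v x) :
    ∀ p q : List V,
      Relation.ReflTransGen (TitsMove K) (p ++ v :: (m ++ q)) (p ++ (m ++ v :: q)) := by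
  induction m with
  | nil => intro p q; exact .refl
  | cons a m ih =>
    intro p q
    refine Relation.ReflTransGen.head
      (tm_of_eq (TitsMove.swap v a (hm a (by simp)) p (m ++ q)) (by simp) rfl) ?_
    exact rtg_of_eq (ih (fun x hx => hm x (by simp [hx])) (p ++ [a]) q) (by simp) (by simp)

/-- Move a letter to the left through letters it commutes with. -/
lemma swap_left (v : V) (m : List V) (hm : ∀ x ∈ m, K.Adj v x) :
    ∀ p q : List V,
      Relation.ReflTransGen (TitsMove K) (p ++ (m ++ v :: q)) (p ++ v :: (m ++ q)) := by
  induction m with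
  | nil => intro p q; exact .refl
  | cons a m ih =>
    intro p q
    refine Relation.ReflTransGen.trans
      (rtg_of_eq (ih (fun x hx => hm x (by simp [hx])) (p ++ [a]) q) (by simp) rfl) ?_
    refine Relation.ReflTransGen.single
      (tm_of_eq (TitsMove.swap a v (hm a (by simp)).symm p (m ++ q)) (by simp) (by simp))

/-- Key confluence lemma: if a word containing two occurrences of `v` separated only by
letters commuting with `v` reduces to the empty word, then the word with this pair of
occurrences deleted also reduces to the empty word. -/
lemma del_spread :
    ∀ u : List V, Relation.ReflTransGen (TitsMove K) u [] →
    ∀ (v : V) (p m q : List V), (∀ x ∈ m, K.Adj v x) →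
      u = p ++ v :: (m ++ v :: q) →
      Relation.ReflTransGen (TitsMove K) (p ++ (m ++ q)) [] := by
  intro u hu
  induction hu using Relation.ReflTransGen.head_induction_on with
  | refl =>
    intro v p m q _ he
    exact absurd he (by simp)
  | head hstep hrest ih =>
    intro v p m q hm he
    cases hstep with
    | swap x y hxy p' q' =>
      rcases two_split he with ⟨r, rfl, rfl⟩ | ⟨rfl, rfl, hs⟩ | ⟨rfl, rfl, hs⟩ |
        ⟨r, rfl, hs⟩
      · -- window inside p
        exact Relation.ReflTransGen.head
          (tm_of_eq (TitsMove.swap x y hxy p' (r ++ (m ++ q))) (by simp) rfl)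
          (rtg_of_eq (ih v (p' ++ y :: x :: r) m q hm (by simp)) (by simp) rfl)
      · -- window starts at the left v (which got renamed to x)
        match m, hm, hs with
        | [], hm, hs =>
          obtain ⟨rfl, rfl⟩ : x = y ∧ q = q' := by simpa using hs
          exact absurd hxy (K.loopless.irrefl _)
        | z :: m, hm, hs =>
          obtain ⟨rfl, rfl⟩ : z = y ∧ m ++ x :: q = q' := by simpa using hs
          exact rtg_of_eq (ih x (p' ++ [z]) m q (fun t ht => hm t (by simp [ht]))
            (by simp)) (by simp) rfl
      · -- window is (last letter of p, left v)
        subst hs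
        refine rtg_of_eq (ih y p' (x :: m) q ?_ (by simp)) (by simp) rfl
        intro t ht
        rcases List.mem_cons.1 ht with rfl | ht
        exacts [hxy.symm, hm t ht]
      · -- window to the right of the left v
        rcases two_split hs.symm with ⟨t, rfl, rfl⟩ | ⟨rfl, rfl, rfl⟩ | ⟨rfl, rfl, hq⟩ |
          ⟨t, rfl, rfl⟩
        · -- window inside m
          refine Relation.ReflTransGen.head
            (tm_of_eq (TitsMove.swap x y hxy (p ++ r) (t ++ q)) (by simp) rfl)
            (rtg_of_eq (ih v p (r ++ y :: x :: t) q ?_ (by simp)) (by simp) rfl)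
          intro z hz
          apply hm
          simp only [List.mem_append, List.mem_cons] at hz ⊢
          tauto
        · -- window is (right v, first letter of q); v got renamed to x
          refine rtg_of_eq (ih x p (r ++ [y]) q' ?_ (by simp)) (by simp) rfl
          intro t ht
          rcases List.mem_append.1 ht with ht | ht
          · exact hm t ht
          · obtain rfl : t = y := by simpa using ht
            exact hxy
        · -- window is (last letter of m, right v); v got renamed to y
          subst hq
          exact rtg_of_eq (ih y p r (x :: q) (fun t ht => hm t (by simp [ht]))
            (by simp)) (by simp) rfl
        · -- window inside q
          exact Relation.ReflTransGen.head
            (tm_of_eq (TitsMove.swap x y hxy (p ++ m ++ t) q') (by simp) rfl)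
            (rtg_of_eq (ih v p m (t ++ y :: x :: q') hm (by simp)) (by simp) rfl)
    | delete x p' q' =>
      rcases two_split he with ⟨r, rfl, rfl⟩ | ⟨rfl, rfl, hs⟩ | ⟨rfl, rfl, hs⟩ |
        ⟨r, rfl, hs⟩
      · -- deleted pair inside p
        exact Relation.ReflTransGen.head
          (tm_of_eq (TitsMove.delete x p' (r ++ (m ++ q))) (by simp) rfl)
          (rtg_of_eq (ih v (p' ++ r) m q hm (by simp)) (by simp) rfl)
      · -- deleted pair starts at the left v (renamed to x)
        match m, hm, hs with
        | [], hm, hs =>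
          obtain ⟨rfl⟩ : q = q' := by simpa using hs
          exact rtg_of_eq hrest (by simp) rfl
        | z :: m, hm, hs =>
          obtain ⟨rfl, -⟩ : z = x ∧ m ++ x :: q = q' := by simpa using hs
          exact absurd (hm _ (by simp)) (K.loopless.irrefl _)
      · -- deleted pair is (last letter of p, left v); v got renamed to x
        subst hs
        exact Relation.ReflTransGen.trans
          (rtg_of_eq (swap_right x m hm p' q) (by simp) rfl) hrest
      · -- deleted pair to the right of the left v
        rcases two_split hs.symm with ⟨t, rfl, rfl⟩ | ⟨rfl, rfl, rfl⟩ | ⟨rfl, rfl, -⟩ |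
          ⟨t, rfl, rfl⟩
        · -- pair inside m
          refine Relation.ReflTransGen.head
            (tm_of_eq (TitsMove.delete x (p ++ r) (t ++ q)) (by simp) rfl)
            (rtg_of_eq (ih v p (r ++ t) q ?_ (by simp)) (by simp) rfl)
          intro z hz
          apply hm
          simp only [List.mem_append] at hz ⊢
          tauto
        · -- pair is (right v, first letter of q); v renamed to x, m renamed to r
          exact Relation.ReflTransGen.trans (swap_left x r hm p q')
            (rtg_of_eq hrest (by simp) rfl)
        · -- pair is (last letter of m, right v): impossible since v ∉ m
          exact absurd (hm _ (by simp)) (K.loopless.irrefl _)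
        · -- pair inside q
          exact Relation.ReflTransGen.head
            (tm_of_eq (TitsMove.delete x (p ++ m ++ t) q') (by simp) rfl)
            (rtg_of_eq (ih v p m (t ++ q') hm (by simp)) (by simp) rfl)

/-- Words equivalent under the equivalence generated by Tits moves reduce to the empty
word simultaneously. -/
lemma eqvGen_iff {a b : List V} (h : Relation.EqvGen (TitsMove K) a b) :
    (Relation.ReflTransGen (TitsMove K) a [] ↔ Relation.ReflTransGen (TitsMove K) b []) := by
  induction h with
  | rel a b hab =>
    constructor
    · intro ha
      cases hab with
      | swap v w hvw p q =>
        exact Relation.ReflTransGen.head (TitsMove.swap w v hvw.symm p q) ha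
      | delete v p q =>
        exact rtg_of_eq (del_spread _ ha v p [] q (by simp) (by simp)) (by simp) rfl
    · intro hb
      exact Relation.ReflTransGen.head hab hb
  | refl a => exact Iff.rfl
  | symm a b _ ih => exact ih.symm
  | trans a b c _ _ ih1 ih2 => exact ih1.trans ih2

/-! ### The group of words modulo Tits moves -/

lemma tm_append_right {a b : List V} (h : TitsMove K a b) (r : List V) :
    TitsMove K (a ++ r) (b ++ r) := by
  cases h with
  | swap v w hvw p q => exact tm_of_eq (TitsMove.swap v w hvw p (q ++ r)) (by simp) (by simp)
  | delete v p q => exact tm_of_eq (TitsMove.delete v p (q ++ r)) (by simp) (by simp)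

lemma tm_append_left {a b : List V} (h : TitsMove K a b) (l : List V) :
    TitsMove K (l ++ a) (l ++ b) := by
  cases h with
  | swap v w hvw p q => exact tm_of_eq (TitsMove.swap v w hvw (l ++ p) q) (by simp) (by simp)
  | delete v p q => exact tm_of_eq (TitsMove.delete v (l ++ p) q) (by simp) (by simp)

lemma tm_reverse {a b : List V} (h : TitsMove K a b) : TitsMove K a.reverse b.reverse := by
  cases h with
  | swap v w hvw p q =>
    exact tm_of_eq (TitsMove.swap w v hvw.symm q.reverse p.reverse) (by simp) (by simp)
  | delete v p q =>
    exact tm_of_eq (TitsMove.delete v q.reverse p.reverse) (by simp) (by simp)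

lemma eqv_map {f : List V → List V} (hf : ∀ a b, TitsMove K a b → TitsMove K (f a) (f b))
    {a b : List V} (h : Relation.EqvGen (TitsMove K) a b) :
    Relation.EqvGen (TitsMove K) (f a) (f b) := by
  induction h with
  | rel a b hab => exact Relation.EqvGen.rel _ _ (hf _ _ hab)
  | refl a => exact Relation.EqvGen.refl _
  | symm a b _ ih => exact Relation.EqvGen.symm _ _ ih
  | trans a b c _ _ ih1 ih2 => exact Relation.EqvGen.trans _ _ _ ih1 ih2

lemma rtg_eqvGen {a b : List V} (h : Relation.ReflTransGen (TitsMove K) a b) :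
    Relation.EqvGen (TitsMove K) a b := by
  induction h with
  | refl => exact Relation.EqvGen.refl _
  | tail _ hbc ih => exact Relation.EqvGen.trans _ _ _ ih (Relation.EqvGen.rel _ _ hbc)

/-- The setoid on words generated by Tits moves. -/
def titsSetoid (K : SimpleGraph V) : Setoid (List V) := Relation.EqvGen.setoid (TitsMove K)

/-- The group of words modulo Tits moves. -/
abbrev TW (K : SimpleGraph V) : Type _ := Quotient (titsSetoid K)

lemma eqv_append {a b c d : List V}
    (h1 : Relation.EqvGen (TitsMove K) a b) (h2 : Relation.EqvGen (TitsMove K) c d) :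
    Relation.EqvGen (TitsMove K) (a ++ c) (b ++ d) :=
  Relation.EqvGen.trans _ _ _
    (eqv_map (fun _ _ h => tm_append_right h c) h1)
    (eqv_map (fun _ _ h => tm_append_left h b) h2)

lemma rtg_rev_append : ∀ a : List V,
    Relation.ReflTransGen (TitsMove K) (a.reverse ++ a) [] := by
  intro a
  induction a with
  | nil => exact .refl
  | cons v t ih =>
    exact Relation.ReflTransGen.head
      (tm_of_eq (TitsMove.delete v t.reverse t) (by simp) rfl) ih

instance : Group (TW K) where
  mul := Quotient.map₂ (· ++ ·) (fun _ _ h1 _ _ h2 => eqv_append h1 h2)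
  one := Quotient.mk (titsSetoid K) []
  inv := Quotient.map List.reverse (fun _ _ h => eqv_map (fun _ _ => tm_reverse) h)
  mul_assoc := by
    rintro ⟨a⟩ ⟨b⟩ ⟨c⟩
    exact congrArg (Quotient.mk (titsSetoid K)) (List.append_assoc a b c)
  one_mul := by
    rintro ⟨a⟩
    exact congrArg (Quotient.mk (titsSetoid K)) (List.nil_append a)
  mul_one := by
    rintro ⟨a⟩
    exact congrArg (Quotient.mk (titsSetoid K)) (List.append_nil a)
  inv_mul_cancel := by
    rintro ⟨a⟩
    exact Quotient.sound (rtg_eqvGen (rtg_rev_append a))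

lemma mul_mk (a b : List V) :
    (Quotient.mk (titsSetoid K) a * Quotient.mk (titsSetoid K) b : TW K) =
      Quotient.mk (titsSetoid K) (a ++ b) := rfl

lemma prod_mk (w : List V) :
    (w.map fun v => (Quotient.mk (titsSetoid K) [v] : TW K)).prod =
      Quotient.mk (titsSetoid K) w := by
  induction w with
  | nil => rfl
  | cons v t ih => rw [List.map_cons, List.prod_cons, ih, mul_mk]; rfl

lemma rels_one :
    ∀ r ∈ racgRels K,
      FreeGroup.lift (fun v => (Quotient.mk (titsSetoid K) [v] : TW K)) r = 1 := by
  rintro r (⟨v, rfl⟩ | ⟨v, w, hvw, rfl⟩)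
  · simp only [map_mul, FreeGroup.lift_apply_of, mul_mk]
    exact Quotient.sound (rtg_eqvGen
      (Relation.ReflTransGen.single (tm_of_eq (TitsMove.delete v [] []) (by simp) rfl)))
  · simp only [pow_two, map_mul, FreeGroup.lift_apply_of, mul_mk]
    refine Quotient.sound (rtg_eqvGen ?_)
    refine Relation.ReflTransGen.head
      (tm_of_eq (TitsMove.swap w v hvw.symm [v] [w]) (by simp) rfl) ?_
    refine Relation.ReflTransGen.head
      (tm_of_eq (TitsMove.delete v [] [w, w]) (by simp) rfl) ?_
    exact Relation.ReflTransGen.single (tm_of_eq (TitsMove.delete w [] []) (by simp) rfl)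

end TitsAux

theorem tits_word_problem_racg
    {V : Type*} (K : SimpleGraph V) (w : List V)
    (h : PresentedGroup.mk (racgRels K) ((w.map FreeGroup.of).prod) = 1) :
    Relation.ReflTransGen (TitsMove K) w [] := by
  open TitsAux in
  have hrel := rels_one (K := K)
  have key : (PresentedGroup.toGroup hrel)
      (PresentedGroup.mk (racgRels K) ((w.map FreeGroup.of).prod)) =
      Quotient.mk (titsSetoid K) w := by
    rw [show (PresentedGroup.toGroup hrel)
        (PresentedGroup.mk (racgRels K) ((w.map FreeGroup.of).prod)) =
        ((PresentedGroup.toGroup hrel).comp (PresentedGroup.mk (racgRels K)))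
          ((w.map FreeGroup.of).prod) from rfl, map_list_prod, List.map_map, ← prod_mk]
    exact congrArg List.prod (List.map_congr_left fun v _ => PresentedGroup.toGroup.of hrel)
  rw [h, map_one] at key
  have heq : Relation.EqvGen (TitsMove K) [] w :=
    Quotient.exact (s := titsSetoid K) key
  exact (eqvGen_iff heq).1 Relation.ReflTransGen.refl
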